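/- The energy not supplied admits the flow-based representation ENS = Σ_{(i,j) ∈ A} (l̃_i − l̃_j) f_{ij} + Σ_{i ∈ V} l̃_i θ_i, where ENS = Σ_{i ∈ V} l_i u_i. -/

import Mathlib

open scoped Classical BigOperators

/-- A finite arborescence: every node has a parent, the root is its own parent,
and every node reaches the root by iterating `parent`.  The arcs of the tree are
the pairs `(parent j, j)` for non-root `j`. -/
structure Arbor (V : Type*) where
  root : V
  parent : V → V
  parent_root : parent root = root
  reaches_root : ∀ v : V, ∃ n : ℕ, parent^[n] v = root

variable {V : Type*}

/-- `T.desc j i` : node `i` belongs to the subtree rooted at `j`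
(equivalently, `j` lies on the directed path from the root to `i`). -/
def Arbor.desc (T : Arbor V) (j i : V) : Prop := ∃ n : ℕ, T.parent^[n] i = j

/-- The children of node `i`. -/
noncomputable def Arbor.children [Fintype V] (T : Arbor V) (i : V) : Finset V :=
  Finset.univ.filter fun j => j ≠ T.root ∧ T.parent j = i

/-- The subtree rooted at `j`, as a finset (the set `V_j`). -/
noncomputable def Arbor.subtree [Fintype V] (T : Arbor V) (j : V) : Finset V :=
  Finset.univ.filter fun i => T.desc j i

/-- The node set of the unique directed path from the root to `j` (the set `path(0,j)`). -/
noncomputable def Arbor.pathSet [Fintype V] (T : Arbor V) (j : V) : Finset V :=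
  Finset.univ.filter fun i => T.desc i j

/-- The arcs of the tree, each arc `(parent j, j)` identified with its head `j ≠ root`. -/
noncomputable def Arbor.arcs [Fintype V] (T : Arbor V) : Finset V :=
  Finset.univ.filter fun j => j ≠ T.root

namespace Arbor

variable (T : Arbor V)

lemma parent_iterate_root (n : ℕ) : T.parent^[n] T.root = T.root := by
  induction n with
  | zero => rfl
  | succ m ih => rw [Function.iterate_succ_apply, T.parent_root, ih]

lemma desc_iff' (j i : V) : T.desc j i ↔ j = i ∨ T.desc j (T.parent i) := by
  constructor
  · rintro ⟨n, hn⟩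
    cases n with
    | zero => exact Or.inl hn.symm
    | succ m => exact Or.inr ⟨m, by simpa [Function.iterate_succ_apply] using hn⟩
  · rintro (rfl | ⟨n, hn⟩)
    · exact ⟨0, rfl⟩
    · exact ⟨n + 1, by simpa [Function.iterate_succ_apply] using hn⟩

lemma desc_root_iff (i : V) : T.desc i T.root ↔ i = T.root := by
  constructor
  · rintro ⟨n, hn⟩
    rw [T.parent_iterate_root] at hn
    exact hn.symm
  · rintro rfl
    exact ⟨0, rfl⟩

lemma not_desc_parent (i : V) (hi : i ≠ T.root) : ¬ T.desc i (T.parent i) := by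
  rintro ⟨n, hn⟩
  have hcyc : T.parent^[n + 1] i = i := by
    rw [Function.iterate_succ_apply]; exact hn
  obtain ⟨m, hm⟩ := T.reaches_root i
  have hper : ∀ k, T.parent^[(n + 1) * k] i = i := by
    intro k
    induction k with
    | zero => rfl
    | succ p ih => rw [Nat.mul_succ, Function.iterate_add_apply, hcyc, ih]
  have hle : m ≤ (n + 1) * m := Nat.le_mul_of_pos_left m n.succ_pos
  have hroot : T.parent^[(n + 1) * m] i = T.root := by
    have h1 : (n + 1) * m = ((n + 1) * m - m) + m := by omega
    rw [h1, Function.iterate_add_apply, hm, T.parent_iterate_root]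
  exact hi ((hper m).symm.trans hroot)

lemma pathSet_insert [Fintype V] (i : V) :
    T.pathSet i = insert i (T.pathSet (T.parent i)) := by
  ext j
  simp [Arbor.pathSet, T.desc_iff' j i]

lemma pathSet_root [Fintype V] : T.pathSet T.root = {T.root} := by
  ext j
  simp [Arbor.pathSet, T.desc_root_iff]

noncomputable def depth (v : V) : ℕ := Nat.find (T.reaches_root v)

lemma depth_parent_lt (v : V) (hv : v ≠ T.root) :
    T.depth (T.parent v) < T.depth v := by
  have hd : T.parent^[T.depth v] v = T.root := Nat.find_spec (T.reaches_root v)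
  have h0 : T.depth v ≠ 0 := by
    intro h; rw [h] at hd; exact hv hd
  obtain ⟨k, hk⟩ := Nat.exists_eq_succ_of_ne_zero h0
  have hk' : T.parent^[k] (T.parent v) = T.root := by
    rw [← Function.iterate_succ_apply, ← hk]; exact hd
  have h2 : Nat.find (T.reaches_root (T.parent v)) ≤ k := Nat.find_min' _ hk'
  have h3 : T.depth (T.parent v) = Nat.find (T.reaches_root (T.parent v)) := rfl
  omega

lemma subtree_root [Fintype V] : T.subtree T.root = Finset.univ := by
  ext i
  simp only [Arbor.subtree, Finset.mem_filter, Finset.mem_univ, true_and, iff_true]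
  exact T.reaches_root i

end Arbor

/-- flow-based representation of the energy not supplied:
`ENS = Σ_{(i,j) ∈ A} (l̃_i − l̃_j) f_{ij} + Σ_i l̃_i θ_i`. -/
theorem ENS_flow_representation [Fintype V] (T : Arbor V) (As : V → Prop)
    (l lt θ θt f u : V → ℝ)
    (hl : ∀ i, 0 ≤ l i)
    (hlt : ∀ i, lt i = ∑ j ∈ T.subtree i, l j)
    (hθ : ∀ i, 0 ≤ θ i)
    (hrec : ∀ i, θt i = θ i + ∑ j ∈ (T.children i).filter (fun j => ¬ As j), θt j)
    (hf : ∀ j, f j = if As j then 0 else θt j)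
    (hu0 : u T.root = θt T.root)
    (hu : ∀ j, j ≠ T.root → u j = u (T.parent j) + (if As j then θt j else 0)) :
    ∑ i, l i * u i =
      (∑ j ∈ T.arcs, (lt (T.parent j) - lt j) * f j) + ∑ i, lt i * θ i := by
  classical
  set P : V → Prop := fun j => j ≠ T.root ∧ As j with hP
  -- the path formula for u
  have hUf : ∀ n (i : V), T.depth i = n →
      u i = θt T.root + ∑ j ∈ (T.pathSet i).filter P, θt j := by
    intro n
    induction n using Nat.strong_induction_on with
    | _ n ih =>
      intro i hdi
      by_cases hi : i = T.root
      · subst hi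
        rw [T.pathSet_root]
        simp [hu0, hP, Finset.filter_singleton]
      · have hltd := T.depth_parent_lt i hi
        have hp := ih _ (hdi ▸ hltd) (T.parent i) rfl
        rw [hu i hi, hp, T.pathSet_insert i, Finset.filter_insert]
        by_cases hAs : As i
        · rw [if_pos (show P i from ⟨hi, hAs⟩), Finset.sum_insert, if_pos hAs]
          · ring
          · intro hmem
            have hd : T.desc i (T.parent i) := by
              have := Finset.mem_filter.mp hmem
              simpa [Arbor.pathSet] using this.1
            exact T.not_desc_parent i hi hd
        · rw [if_neg (show ¬ P i from fun h => hAs h.2), if_neg hAs]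
          ring
  have hU : ∀ i, u i = θt T.root + ∑ j ∈ (T.pathSet i).filter P, θt j :=
    fun i => hUf _ i rfl
  -- swap the double sum
  have hswap : ∑ i, l i * ∑ j ∈ (T.pathSet i).filter P, θt j
      = ∑ j ∈ Finset.univ.filter P, lt j * θt j := by
    have h1 : ∀ i : V, l i * ∑ j ∈ (T.pathSet i).filter P, θt j
        = ∑ j ∈ Finset.univ.filter P, if T.desc j i then l i * θt j else 0 := by
      intro i
      rw [Finset.mul_sum, ← Finset.sum_filter]
      apply Finset.sum_congr
      · ext j
        simp [Arbor.pathSet, Finset.mem_filter, and_comm]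
      · intros; rfl
    simp_rw [h1]
    rw [Finset.sum_comm]
    refine Finset.sum_congr rfl fun j _ => ?_
    rw [← Finset.sum_filter]
    have h2 : Finset.univ.filter (fun i => T.desc j i) = T.subtree j := rfl
    rw [h2, ← Finset.sum_mul, hlt j]
  -- LHS value
  have hLHS : ∑ i, l i * u i
      = lt T.root * θt T.root + ∑ j ∈ Finset.univ.filter P, lt j * θt j := by
    simp_rw [hU, mul_add]
    rw [Finset.sum_add_distrib, hswap]
    congr 1
    rw [← Finset.sum_mul]
    congr 1
    rw [hlt T.root, T.subtree_root]
  set g : V → ℝ := fun j => if As j then 0 else θt j with hg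
  -- children sum
  have hchild : ∑ i, lt i * ∑ j ∈ T.children i, g j
      = ∑ j ∈ T.arcs, lt (T.parent j) * g j := by
    simp_rw [Finset.mul_sum, Arbor.children, Finset.sum_filter]
    rw [Finset.sum_comm, Arbor.arcs, Finset.sum_filter]
    refine Finset.sum_congr rfl fun j _ => ?_
    by_cases hj : j = T.root
    · simp [hj]
    · simp only [hj, ne_eq, not_false_eq_true, true_and, if_true]
      rw [Finset.sum_ite_eq]
      simp
  -- rewrite θ via hrec
  have hθsum : ∑ i, lt i * θ i
      = ∑ i, lt i * θt i - ∑ j ∈ T.arcs, lt (T.parent j) * g j := by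
    rw [← hchild, ← Finset.sum_sub_distrib]
    refine Finset.sum_congr rfl fun i _ => ?_
    have hθi : θ i = θt i - ∑ j ∈ (T.children i).filter (fun j => ¬ As j), θt j := by
      rw [hrec i]; ring
    have hcs : ∑ j ∈ (T.children i).filter (fun j => ¬ As j), θt j
        = ∑ j ∈ T.children i, g j := by
      rw [Finset.sum_filter]
      refine Finset.sum_congr rfl fun j _ => ?_
      by_cases h : As j <;> simp [hg, h]
    rw [hθi, hcs]; ring
  -- flow sum
  have hfsum : ∑ j ∈ T.arcs, (lt (T.parent j) - lt j) * f j
      = ∑ j ∈ T.arcs, (lt (T.parent j) - lt j) * g j := by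
    refine Finset.sum_congr rfl fun j _ => ?_
    rw [hf j]
  -- split the full sum at the root
  have harcs : T.arcs = Finset.univ.erase T.root := by
    rw [Arbor.arcs, Finset.filter_ne']
  have hsplit : ∑ i, lt i * θt i
      = lt T.root * θt T.root + ∑ j ∈ T.arcs, lt j * θt j := by
    rw [harcs]
    exact (Finset.add_sum_erase _ _ (Finset.mem_univ T.root)).symm
  have hfilt : ∑ j ∈ Finset.univ.filter P, lt j * θt j
      = ∑ j ∈ T.arcs, (if As j then lt j * θt j else 0) := by
    rw [Arbor.arcs, ← Finset.sum_filter, Finset.filter_filter]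
  rw [hLHS, hfsum, hθsum, hsplit, hfilt]
  rw [show (∑ j ∈ T.arcs, if As j then lt j * θt j else 0)
      = ∑ j ∈ T.arcs, ((lt (T.parent j) - lt j) * g j + (lt j * θt j - lt (T.parent j) * g j))
    from Finset.sum_congr rfl fun j _ => by by_cases h : As j <;> simp [hg, h] <;> ring]
  rw [Finset.sum_add_distrib, Finset.sum_sub_distrib]
  ring
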